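/- Summed normalized-direction bound: let E be a complete real inner product space, L_e : E → ℝ G-smooth and L_p : E → ℝ differentiable. Let iterates satisfy θ_{i+1} = θ_i − α d_i with d_i = ∇L_e(θ_i) + λ_i ∇L_p(θ_i), λ_i ≥ 0, 0 < α ≤ 1/G, and ⟨∇L_p(θ_i), d_i⟩ ≤ ε_i for i = 1, …, t. Then Σ_{i=1}^{t} ‖d_i‖² / (1 + λ_i)² ≤ (2/α)(L_e(θ_1) − L_e(θ_{t+1})) + 2 Σ_{i=1}^{t} λ_i ε_i. -/

import Mathlib

open RealInnerProductSpace

lemma descent_lemma {E : Type*} [NormedAddCommGroup E] [InnerProductSpace ℝ E] [CompleteSpace E]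
    (f : E → ℝ) (g : E → E) (G : ℝ) (hg : ∀ x, HasGradientAt f (g x) x)
    (hL : ∀ x y, ‖g x - g y‖ ≤ G * ‖x - y‖) (x v : E) :
    f (x + v) ≤ f x + ⟪g x, v⟫ + G / 2 * ‖v‖ ^ 2 := by
  set c : ℝ := ⟪g x, v⟫ with hc
  set φ : ℝ → ℝ := fun s => f (x + s • v) - s * c - (G / 2 * ‖v‖ ^ 2) * s ^ 2 with hφ
  have hφ' : ∀ s : ℝ, HasDerivAt φ (⟪g (x + s • v), v⟫ - c - G * s * ‖v‖ ^ 2) s := by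
    intro s
    have hline : HasDerivAt (fun s : ℝ => x + s • v) v s := by
      simpa using ((hasDerivAt_id s).smul_const v).const_add x
    have h1 : HasDerivAt (fun s : ℝ => f (x + s • v)) ⟪g (x + s • v), v⟫ s := by
      have := (hg (x + s • v)).hasFDerivAt.comp_hasDerivAt s hline
      simp [Function.comp_def] at this
      exact this
    have h2 : HasDerivAt (fun s : ℝ => s * c) c s := by
      simpa using (hasDerivAt_id s).mul_const c
    have h3 := (hasDerivAt_pow 2 s).const_mul (G / 2 * ‖v‖ ^ 2)
    have := (h1.sub h2).sub h3
    exact this.congr_deriv (by push_cast; ring)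
  have hanti : AntitoneOn φ (Set.Icc 0 1) := by
    apply antitoneOn_of_deriv_nonpos (convex_Icc 0 1)
    · exact Continuous.continuousOn (by
        exact (fun s => (hφ' s).differentiableAt.continuousAt) |> fun h =>
          continuous_iff_continuousAt.2 h)
    · intro s _
      exact ((hφ' s).differentiableAt).differentiableWithinAt
    · intro s hs
      rw [interior_Icc] at hs
      rw [(hφ' s).deriv]
      have hsn : ‖g (x + s • v) - g x‖ ≤ G * (s * ‖v‖) := by
        have := hL (x + s • v) x
        simpa [norm_smul, abs_of_pos hs.1, mul_assoc] using this
      have hinner : ⟪g (x + s • v), v⟫ - c ≤ G * s * ‖v‖ ^ 2 := by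
        rw [hc, ← inner_sub_left]
        calc ⟪g (x + s • v) - g x, v⟫ ≤ ‖g (x + s • v) - g x‖ * ‖v‖ := real_inner_le_norm _ _
          _ ≤ G * (s * ‖v‖) * ‖v‖ := by
              exact mul_le_mul_of_nonneg_right hsn (norm_nonneg v)
          _ = G * s * ‖v‖ ^ 2 := by ring
      linarith
  have h01 : φ 1 ≤ φ 0 := hanti (by norm_num) (by norm_num) zero_le_one
  simp only [hφ, one_smul, zero_smul, add_zero, one_pow, mul_one, zero_mul, zero_pow,
    mul_zero, sub_zero, one_mul] at h01
  linarith

theorem tele (u : ℕ → ℝ) (t : ℕ) :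
    ∑ i ∈ Finset.Icc 1 t, (u i - u (i + 1)) = u 1 - u (t + 1) := by
  induction t with
  | zero => simp
  | succ n ih =>
      rw [Finset.sum_Icc_succ_top (by omega : 1 ≤ n + 1), ih]
      ring

/-- Summed normalized-direction bound: with θ_{i+1} = θ_i − α d_i,
d_i = ∇L_e(θ_i) + λ_i ∇L_p(θ_i), λ_i ≥ 0, 0 < α ≤ 1/G, ⟨∇L_p(θ_i), d_i⟩ ≤ ε_i for
i = 1, …, t, one has Σ_{i=1}^t ‖d_i‖²/(1+λ_i)² ≤ (2/α)(L_e(θ_1) − L_e(θ_{t+1})) + 2 Σ_{i=1}^t λ_i ε_i. -/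
theorem summed_normalized_direction_bound
    {E : Type*} [NormedAddCommGroup E] [InnerProductSpace ℝ E] [CompleteSpace E]
    (Le Lp : E → ℝ) (gradLe gradLp : E → E) (G : ℝ)
    (hgradLe : ∀ x : E, HasGradientAt Le (gradLe x) x)
    (hLipLe : ∀ x y : E, ‖gradLe x - gradLe y‖ ≤ G * ‖x - y‖)
    (hgradLp : ∀ x : E, HasGradientAt Lp (gradLp x) x)
    (θ : ℕ → E) (d : ℕ → E) (lam ε : ℕ → ℝ) (α : ℝ) (t : ℕ)
    (hα0 : 0 < α) (hαG : α ≤ 1 / G)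
    (hlam : ∀ i, 1 ≤ i → i ≤ t → 0 ≤ lam i)
    (hd : ∀ i, 1 ≤ i → i ≤ t → d i = gradLe (θ i) + lam i • gradLp (θ i))
    (hupdate : ∀ i, 1 ≤ i → i ≤ t → θ (i + 1) = θ i - α • d i)
    (hconstr : ∀ i, 1 ≤ i → i ≤ t → ⟪gradLp (θ i), d i⟫ ≤ ε i) :
    ∑ i ∈ Finset.Icc 1 t, ‖d i‖ ^ 2 / (1 + lam i) ^ 2 ≤
      (2 / α) * (Le (θ 1) - Le (θ (t + 1))) +
        2 * ∑ i ∈ Finset.Icc 1 t, lam i * ε i := by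
  have key : ∀ i ∈ Finset.Icc 1 t,
      ‖d i‖ ^ 2 / (1 + lam i) ^ 2 ≤
        (2 / α) * (Le (θ i) - Le (θ (i + 1))) + 2 * (lam i * ε i) := by
    intro i hi
    rw [Finset.mem_Icc] at hi
    obtain ⟨hi1, hit⟩ := hi
    have hlami := hlam i hi1 hit
    have hdenom : (1 : ℝ) ≤ (1 + lam i) ^ 2 := by nlinarith
    have hstep1 : ‖d i‖ ^ 2 / (1 + lam i) ^ 2 ≤ ‖d i‖ ^ 2 :=
      div_le_self (sq_nonneg _) hdenom
    by_cases hE : Subsingleton E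
    · have hd0 : d i = 0 := Subsingleton.elim _ _
      have hθ : θ i = θ (i + 1) := Subsingleton.elim _ _
      have hε : 0 ≤ ε i := by
        have := hconstr i hi1 hit
        rw [hd0] at this
        simpa using this
      rw [hd0, hθ]
      have h0 : (0:ℝ) ≤ lam i * ε i := mul_nonneg hlami hε
      simp only [norm_zero, sub_self, mul_zero, zero_add, ne_eq,
        OfNat.ofNat_ne_zero, not_false_eq_true, zero_pow, zero_div]
      linarith
    · -- nontrivial case
      have : Nontrivial E := not_subsingleton_iff_nontrivial.mp hE
      obtain ⟨x, y, hxy⟩ := exists_pair_ne E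
      have hnxy : 0 < ‖x - y‖ := by
        rw [norm_pos_iff, sub_ne_zero]; exact hxy
      have hG0 : 0 ≤ G := by
        have h1 := (norm_nonneg (gradLe x - gradLe y)).trans (hLipLe x y)
        nlinarith
      have hG : 0 < G := by
        rcases lt_or_eq_of_le hG0 with h | h
        · exact h
        · exfalso; rw [← h] at hαG; simp at hαG; linarith
      have hαG1 : α * G ≤ 1 := (le_div_iff₀ hG).mp hαG
      -- descent step
      have hup := hupdate i hi1 hit
      have hθv : θ (i + 1) = θ i + (-(α • d i)) := by
        rw [hup]; abel
      have hdesc : Le (θ (i + 1)) ≤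
          Le (θ i) + ⟪gradLe (θ i), -(α • d i)⟫ + G / 2 * ‖-(α • d i)‖ ^ 2 := by
        rw [hθv]
        exact descent_lemma Le gradLe G hgradLe hLipLe (θ i) (-(α • d i))
      have hinner : ⟪gradLe (θ i), -(α • d i)⟫ =
          -α * (‖d i‖ ^ 2 - lam i * ⟪gradLp (θ i), d i⟫) := by
        have hge : gradLe (θ i) = d i - lam i • gradLp (θ i) := by
          rw [hd i hi1 hit]; abel
        rw [inner_neg_right, real_inner_smul_right, hge, inner_sub_left,
          real_inner_smul_left, real_inner_self_eq_norm_sq]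
        ring
      have hnv : ‖-(α • d i)‖ ^ 2 = α ^ 2 * ‖d i‖ ^ 2 := by
        rw [norm_neg, norm_smul, Real.norm_eq_abs, abs_of_pos hα0, mul_pow]
      have hcon := hconstr i hi1 hit
      have hlc : lam i * ⟪gradLp (θ i), d i⟫ ≤ lam i * ε i :=
        mul_le_mul_of_nonneg_left hcon hlami
      have hquad : G / 2 * (α ^ 2 * ‖d i‖ ^ 2) ≤ α / 2 * ‖d i‖ ^ 2 := by
        nlinarith [sq_nonneg (‖d i‖), mul_pos hα0 hα0]
      have hmain : α / 2 * ‖d i‖ ^ 2 ≤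
          (Le (θ i) - Le (θ (i + 1))) + α * (lam i * ε i) := by
        rw [hinner, hnv] at hdesc
        nlinarith
      set A := Le (θ i) - Le (θ (i + 1)) with hA
      calc ‖d i‖ ^ 2 / (1 + lam i) ^ 2 ≤ ‖d i‖ ^ 2 := hstep1
        _ = α * ‖d i‖ ^ 2 / α := by field_simp
        _ ≤ (2 * A + 2 * α * (lam i * ε i)) / α := by
            exact (div_le_div_iff_of_pos_right hα0).mpr (by linarith)
        _ = (2 / α) * A + 2 * (lam i * ε i) := by field_simp
  calc ∑ i ∈ Finset.Icc 1 t, ‖d i‖ ^ 2 / (1 + lam i) ^ 2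
      ≤ ∑ i ∈ Finset.Icc 1 t,
          ((2 / α) * (Le (θ i) - Le (θ (i + 1))) + 2 * (lam i * ε i)) :=
        Finset.sum_le_sum key
    _ = (2 / α) * ∑ i ∈ Finset.Icc 1 t, (Le (θ i) - Le (θ (i + 1))) +
          2 * ∑ i ∈ Finset.Icc 1 t, lam i * ε i := by
        rw [Finset.sum_add_distrib, Finset.mul_sum, Finset.mul_sum]
    _ = (2 / α) * (Le (θ 1) - Le (θ (t + 1))) +
          2 * ∑ i ∈ Finset.Icc 1 t, lam i * ε i := by
        rw [tele (fun i => Le (θ i)) t]
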